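/- For the forward–backward algorithm with deviations, the series Σ_{n≥0} (1 − ζ_n)ℓ_n² converges; consequently ℓ_n² → 0, ‖u_n‖ → 0 and ‖v_n‖ → 0 as n → ∞. -/

import Mathlib

open Filter
open scoped RealInnerProductSpace Pointwise Topology

/-- The `M`-induced norm `‖w‖_M = √⟪w, M w⟫`. -/
noncomputable def mnorm {H : Type*} [NormedAddCommGroup H] [InnerProductSpace ℝ H]
    (M : H →L[ℝ] H) (w : H) : ℝ :=
  Real.sqrt ⟪w, M w⟫

set_option maxHeartbeats 1000000 in
private lemma key_identity' {H : Type*} [NormedAddCommGroup H] [InnerProductSpace ℝ H]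
    (M : H →L[ℝ] H) (hMsa : ∀ a b : H, ⟪M a, b⟫ = ⟪a, M b⟫)
    (l g b : ℝ) (d U V E : H) :
    ⟪d + l • (E - d - ((1 - l) * g * b) • U - (4 - 2 * l - g * b) • V),
      M (d + l • (E - d - ((1 - l) * g * b) • U - (4 - 2 * l - g * b) • V))⟫
      + (l * (4 - 2 * l - g * b) / 2) *
        ⟪E - d + (l * g * b) • U - (2 * (1 - l)) • V,
          M (E - d + (l * g * b) • U - (2 * (1 - l)) • V)⟫
      + 2 * l * (⟪M (d + ((1 - l) * g * b) • U + (4 - 2 * l - g * b) • V - E), E⟫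
          + (g * b / 4) * ⟪E - d - (2 - l * g * b) • U, M (E - d - (2 - l * g * b) • U)⟫)
    = ⟪d, M d⟫ + (l * g * b * (2 - l * g * b)) * ⟪U, M U⟫
        + (l * (2 - l * g * b) * (4 - 2 * l - g * b)) * ⟪V, M V⟫ := by
  have symm : ∀ a b : H, ⟪a, M b⟫ = ⟪b, M a⟫ := fun a b => by
    rw [real_inner_comm, hMsa]
  have s1 := symm U d; have s2 := symm V d; have s3 := symm E d
  have s4 := symm V U; have s5 := symm E U; have s6 := symm E V
  rw [hMsa (d + ((1 - l) * g * b) • U + (4 - 2 * l - g * b) • V - E) E]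
  simp only [map_add, map_sub, map_smul, inner_add_left, inner_add_right,
    inner_sub_left, inner_sub_right, real_inner_smul_left, real_inner_smul_right,
    smul_eq_mul]
  rw [s1, s2, s3, s4, s5, s6]
  ring

private lemma young' {H : Type*} [NormedAddCommGroup H] [InnerProductSpace ℝ H]
    (M Minv : H →L[ℝ] H) (hMsa : ∀ a b : H, ⟪M a, b⟫ = ⟪a, M b⟫)
    (hMinv₂ : ∀ a : H, M (Minv a) = a)
    (hMnn : ∀ a : H, 0 ≤ ⟪a, M a⟫) (β : ℝ) (D P : H) :
    0 ≤ ⟪D, Minv D⟫ + β * ⟪D, P⟫ + β ^ 2 / 4 * ⟪P, M P⟫ := by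
  have h := hMnn (Minv D + (β / 2) • P)
  have e1 : ⟪Minv D, M (Minv D)⟫ = ⟪D, Minv D⟫ := by rw [hMinv₂, real_inner_comm]
  have e2 : ⟪Minv D, M P⟫ = ⟪D, P⟫ := by rw [← hMsa, hMinv₂]
  have e3 : ⟪P, M (Minv D)⟫ = ⟪D, P⟫ := by rw [hMinv₂, real_inner_comm]
  simp only [map_add, map_smul, inner_add_left, inner_add_right,
    real_inner_smul_left, real_inner_smul_right, smul_eq_mul] at h
  rw [e1, e2, e3] at h
  nlinarith [h]

set_option maxHeartbeats 2000000 in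
/-- summability of (1 − ζ_n)ℓ_n² and vanishing of ℓ_n², u_n, v_n. -/
theorem summability_and_vanishing
    {H : Type*} [NormedAddCommGroup H] [InnerProductSpace ℝ H] [CompleteSpace H]
    (M : H →L[ℝ] H)
    (hMsa : ∀ a b : H, ⟪M a, b⟫ = ⟪a, M b⟫)
    (hMpos : ∃ c > (0:ℝ), ∀ a : H, ⟪a, M a⟫ ≥ c * ‖a‖ ^ 2)
    (Minv : H →L[ℝ] H)
    (hMinv₁ : ∀ a : H, Minv (M a) = a)
    (hMinv₂ : ∀ a : H, M (Minv a) = a)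
    (β : ℝ) (hβ : 0 < β)
    (A : H → Set H)
    (hAmono : ∀ a b ua vb : H, ua ∈ A a → vb ∈ A b → ⟪ua - vb, a - b⟫ ≥ 0)
    (hAmax : ∀ a ua : H, (∀ b vb : H, vb ∈ A b → ⟪ua - vb, a - b⟫ ≥ 0) → ua ∈ A a)
    (C : H → H)
    (hC : ∀ a b : H, ⟪C a - C b, a - b⟫ ≥ (1 / β) * mnorm Minv (C a - C b) ^ 2)
    (hzer : ∃ w : H, -C w ∈ A w)
    (ε : ℝ) (hε0 : 0 < ε) (hε1 : ε < min 1 (4 / (3 + β)))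
    (ζ γ lam : ℕ → ℝ)
    (hζ : ∀ n, 0 ≤ ζ n ∧ ζ n ≤ 1 - ε)
    (hγ : ∀ n, ε ≤ γ n ∧ γ n ≤ (4 - 3 * ε) / β)
    (hlam : ∀ n, ε ≤ lam n ∧ lam n ≤ 2 - γ n * β / 2 - ε / 2)
    (x u v p y z : ℕ → H) (ℓsq : ℕ → ℝ)
    (hu0 : u 0 = 0) (hv0 : v 0 = 0)
    (hy : ∀ n, y n = x n + u n)
    (hz : ∀ n, z n = x n + (((1 - lam n) * γ n * β) / (2 - lam n * γ n * β)) • u n + v n)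
    (hp : ∀ n, M (z n) - M (p n) - γ n • C (y n) ∈ γ n • A (p n))
    (hx : ∀ n, x (n + 1) = x n + lam n • (p n - z n))
    (hℓ : ∀ n, ℓsq n = (lam n * (4 - 2 * lam n - γ n * β) / 2) *
      mnorm M (p n - x n + ((lam n * γ n * β) / (2 - lam n * γ n * β)) • u n
        - ((2 * (1 - lam n)) / (4 - 2 * lam n - γ n * β)) • v n) ^ 2)
    (hdev : ∀ n, (lam (n+1) * γ (n+1) * β / (2 - lam (n+1) * γ (n+1) * β)) * mnorm M (u (n+1)) ^ 2
        + (lam (n+1) * (2 - lam (n+1) * γ (n+1) * β) / (4 - 2 * lam (n+1) - γ (n+1) * β)) * mnorm M (v (n+1)) ^ 2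
        ≤ ζ n * ℓsq n)
    :
    Summable (fun n => (1 - ζ n) * ℓsq n) ∧
      Tendsto ℓsq atTop (𝓝 0) ∧
      Tendsto (fun n => ‖u n‖) atTop (𝓝 0) ∧
      Tendsto (fun n => ‖v n‖) atTop (𝓝 0) := by
  obtain ⟨w, hw⟩ := hzer
  obtain ⟨c, hc0, hcpos⟩ := hMpos
  have hε1' : ε < 1 := lt_of_lt_of_le hε1 (min_le_left _ _)
  have hMnn : ∀ a : H, 0 ≤ ⟪a, M a⟫ := fun a =>
    le_trans (by positivity) (hcpos a)
  have hMinvnn : ∀ a : H, 0 ≤ ⟪a, Minv a⟫ := fun a => by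
    have h := hMnn (Minv a)
    rw [hMinv₂, real_inner_comm] at h
    exact h
  have msq : ∀ X : H, mnorm M X ^ 2 = ⟪X, M X⟫ := fun X =>
    Real.sq_sqrt (hMnn X)
  have msqinv : ∀ X : H, mnorm Minv X ^ 2 = ⟪X, Minv X⟫ := fun X =>
    Real.sq_sqrt (hMinvnn X)
  -- parameter facts
  have hl0 : ∀ k, 0 < lam k := fun k => lt_of_lt_of_le hε0 (hlam k).1
  have hγ0 : ∀ k, 0 < γ k := fun k => lt_of_lt_of_le hε0 (hγ k).1
  have hgb1 : ∀ k, ε * β ≤ γ k * β := fun k =>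
    mul_le_mul_of_nonneg_right (hγ k).1 hβ.le
  have hgb2 : ∀ k, γ k * β ≤ 4 - 3 * ε := fun k => by
    have h := mul_le_mul_of_nonneg_right (hγ k).2 hβ.le
    rwa [div_mul_cancel₀ _ hβ.ne'] at h
  have hgb0 : ∀ k, 0 < γ k * β := fun k => mul_pos (hγ0 k) hβ
  have hA4pos : ∀ k, 0 < 4 - 2 * lam k - γ k * β := fun k => by
    have h := (hlam k).2
    nlinarith [hε0]
  have hA2low : ∀ k, 7 * ε / 8 ≤ 2 - lam k * γ k * β := by
    intro k
    have h1 := mul_le_mul_of_nonneg_right (hlam k).2 (hgb0 k).le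
    nlinarith [sq_nonneg (γ k * β - 2 + ε / 2), hε0, hε1', (hlam k).1,
      mul_pos hε0 hε0]
  have hA2pos : ∀ k, 0 < 2 - lam k * γ k * β := fun k =>
    lt_of_lt_of_le (by positivity) (hA2low k)
  have hlgb : ∀ k, ε * ε * β ≤ lam k * γ k * β := fun k => by
    have h := mul_le_mul (hlam k).1 (hγ k).1 hε0.le (hl0 k).le
    exact mul_le_mul_of_nonneg_right h hβ.le
  have hκu : ∀ k, ε ^ 2 * β / 2 ≤ lam k * γ k * β / (2 - lam k * γ k * β) := by
    intro k
    rw [le_div_iff₀ (hA2pos k)]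
    nlinarith [hlgb k, mul_pos (mul_pos hε0 hε0) hβ, hA2pos k,
      mul_nonneg (mul_nonneg (mul_nonneg hε0.le hε0.le) hβ.le)
        (mul_nonneg (mul_nonneg (hl0 k).le (hγ0 k).le) hβ.le)]
  have hκv : ∀ k, 7 * ε ^ 2 / 32 ≤ lam k * (2 - lam k * γ k * β) / (4 - 2 * lam k - γ k * β) := by
    intro k
    rw [le_div_iff₀ (hA4pos k)]
    have h1 : ε * (7 * ε / 8) ≤ lam k * (2 - lam k * γ k * β) :=
      mul_le_mul (hlam k).1 (hA2low k) (by positivity) (hl0 k).le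
    have h2 : 4 - 2 * lam k - γ k * β ≤ 4 := by
      nlinarith [hl0 k, hgb0 k]
    nlinarith [h1, h2, hε0, hA4pos k]
  have hℓnn : ∀ k, 0 ≤ ℓsq k := by
    intro k
    rw [hℓ k]
    exact mul_nonneg (div_nonneg (mul_nonneg (hl0 k).le (hA4pos k).le) (by norm_num))
      (sq_nonneg _)
  -- the key per-iteration inequality
  have key : ∀ n, mnorm M (x (n + 1) - w) ^ 2 + ℓsq n ≤ mnorm M (x n - w) ^ 2
      + (lam n * γ n * β / (2 - lam n * γ n * β)) * mnorm M (u n) ^ 2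
      + (lam n * (2 - lam n * γ n * β) / (4 - 2 * lam n - γ n * β)) * mnorm M (v n) ^ 2 := by
    intro n
    obtain ⟨U0, hU0⟩ : ∃ U0 : H, U0 = (2 - lam n * γ n * β)⁻¹ • u n := ⟨_, rfl⟩
    obtain ⟨V0, hV0⟩ : ∃ V0 : H, V0 = (4 - 2 * lam n - γ n * β)⁻¹ • v n := ⟨_, rfl⟩
    have hu : (2 - lam n * γ n * β) • U0 = u n := by
      rw [hU0]; exact smul_inv_smul₀ (hA2pos n).ne' (u n)
    have hv : (4 - 2 * lam n - γ n * β) • V0 = v n := by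
      rw [hV0]; exact smul_inv_smul₀ (hA4pos n).ne' (v n)
    have hc1 : (((1 - lam n) * γ n * β) / (2 - lam n * γ n * β)) • u n
        = ((1 - lam n) * γ n * β) • U0 := by
      rw [← hu, smul_smul, div_mul_cancel₀ _ (hA2pos n).ne']
    have hc2 : ((lam n * γ n * β) / (2 - lam n * γ n * β)) • u n
        = (lam n * γ n * β) • U0 := by
      rw [← hu, smul_smul, div_mul_cancel₀ _ (hA2pos n).ne']
    have hc3 : ((2 * (1 - lam n)) / (4 - 2 * lam n - γ n * β)) • v n
        = (2 * (1 - lam n)) • V0 := by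
      rw [← hv, smul_smul, div_mul_cancel₀ _ (hA4pos n).ne']
    have e1 : x (n + 1) - w = (x n - w) + lam n • ((p n - w) - (x n - w)
        - ((1 - lam n) * γ n * β) • U0 - (4 - 2 * lam n - γ n * β) • V0) := by
      rw [hx n, hz n, hc1, ← hv]; module
    have e2 : p n - x n + ((lam n * γ n * β) / (2 - lam n * γ n * β)) • u n
        - ((2 * (1 - lam n)) / (4 - 2 * lam n - γ n * β)) • v n
        = (p n - w) - (x n - w) + (lam n * γ n * β) • U0 - (2 * (1 - lam n)) • V0 := by
      rw [hc2, hc3]; module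
    have e3 : z n - p n = (x n - w) + ((1 - lam n) * γ n * β) • U0
        + (4 - 2 * lam n - γ n * β) • V0 - (p n - w) := by
      rw [hz n, hc1, ← hv]; module
    have e4 : p n - y n = (p n - w) - (x n - w) - (2 - lam n * γ n * β) • U0 := by
      rw [hy n, ← hu]; module
    -- nonnegativity of the monotonicity/cocoercivity residual
    have hmem := hp n
    rw [Set.mem_smul_set] at hmem
    obtain ⟨q, hqA, hqe⟩ := hmem
    have mono := hAmono (p n) w q (-C w) hqA hw
    have hvq : M (z n - p n) - γ n • (C (y n) - C w) = γ n • (q - -C w) := by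
      rw [map_sub, smul_sub (γ n) q, hqe]; module
    have h1 : 0 ≤ ⟪M (z n - p n) - γ n • (C (y n) - C w), p n - w⟫ := by
      rw [hvq, real_inner_smul_left]
      exact mul_nonneg (hγ0 n).le mono
    rw [inner_sub_left, real_inner_smul_left] at h1
    have hsplit : ⟪C (y n) - C w, p n - w⟫
        = ⟪C (y n) - C w, p n - y n⟫ + ⟪C (y n) - C w, y n - w⟫ := by
      rw [← inner_add_right, sub_add_sub_cancel]
    rw [hsplit] at h1
    have h2 := hC (y n) w
    rw [msqinv] at h2
    have h2' : ⟪C (y n) - C w, Minv (C (y n) - C w)⟫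
        ≤ β * ⟪C (y n) - C w, y n - w⟫ := by
      have hh := (mul_le_mul_iff_right₀ hβ).mpr h2.le
      rwa [← mul_assoc, mul_one_div_cancel hβ.ne', one_mul] at hh
    have h3 := young' M Minv hMsa hMinv₂ hMnn β (C (y n) - C w) (p n - y n)
    have hconstrZ : 0 ≤ ⟪M (z n - p n), p n - w⟫
        + γ n * β / 4 * ⟪p n - y n, M (p n - y n)⟫ := by
      nlinarith [h1, h2', h3, hβ, (hγ0 n),
        mul_nonneg (hγ0 n).le h3,
        mul_le_mul_of_nonneg_left h2' (hγ0 n).le,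
        mul_nonneg hβ.le h1]
    have hconstrI : 0 ≤ ⟪M ((x n - w) + ((1 - lam n) * γ n * β) • U0
          + (4 - 2 * lam n - γ n * β) • V0 - (p n - w)), p n - w⟫
        + γ n * β / 4 * ⟪(p n - w) - (x n - w) - (2 - lam n * γ n * β) • U0,
            M ((p n - w) - (x n - w) - (2 - lam n * γ n * β) • U0)⟫ := by
      rw [← e3, ← e4]; exact hconstrZ
    have idty := key_identity' M hMsa (lam n) (γ n) β (x n - w) U0 V0 (p n - w)
    have cU : (lam n * γ n * β / (2 - lam n * γ n * β)) * mnorm M (u n) ^ 2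
        = (lam n * γ n * β * (2 - lam n * γ n * β)) * ⟪U0, M U0⟫ := by
      rw [msq, ← hu, map_smul, real_inner_smul_left, real_inner_smul_right]
      field_simp [(hA2pos n).ne']
    have cV : (lam n * (2 - lam n * γ n * β) / (4 - 2 * lam n - γ n * β)) * mnorm M (v n) ^ 2
        = (lam n * (2 - lam n * γ n * β) * (4 - 2 * lam n - γ n * β)) * ⟪V0, M V0⟫ := by
      rw [msq, ← hv, map_smul, real_inner_smul_left, real_inner_smul_right]
      field_simp [(hA4pos n).ne']
    have h2l : 0 ≤ 2 * lam n * (⟪M ((x n - w) + ((1 - lam n) * γ n * β) • U0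
          + (4 - 2 * lam n - γ n * β) • V0 - (p n - w)), p n - w⟫
        + γ n * β / 4 * ⟪(p n - w) - (x n - w) - (2 - lam n * γ n * β) • U0,
            M ((p n - w) - (x n - w) - (2 - lam n * γ n * β) • U0)⟫) :=
      mul_nonneg (by linarith [hl0 n]) hconstrI
    rw [hℓ n, e1, e2, cU, cV]
    simp only [msq]
    linarith [idty, h2l]
  -- Lyapunov function
  obtain ⟨φ, hφ⟩ : ∃ φ : ℕ → ℝ, ∀ k, φ k = mnorm M (x k - w) ^ 2
      + (lam k * γ k * β / (2 - lam k * γ k * β)) * mnorm M (u k) ^ 2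
      + (lam k * (2 - lam k * γ k * β) / (4 - 2 * lam k - γ k * β)) * mnorm M (v k) ^ 2 :=
    ⟨_, fun k => rfl⟩
  have hφnn : ∀ k, 0 ≤ φ k := by
    intro k
    rw [hφ k]
    have c1 : 0 ≤ lam k * γ k * β / (2 - lam k * γ k * β) :=
      div_nonneg (mul_nonneg (mul_nonneg (hl0 k).le (hγ0 k).le) hβ.le) (hA2pos k).le
    have c2 : 0 ≤ lam k * (2 - lam k * γ k * β) / (4 - 2 * lam k - γ k * β) :=
      div_nonneg (mul_nonneg (hl0 k).le (hA2pos k).le) (hA4pos k).le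
    have := sq_nonneg (mnorm M (x k - w))
    nlinarith [mul_nonneg c1 (sq_nonneg (mnorm M (u k))),
      mul_nonneg c2 (sq_nonneg (mnorm M (v k)))]
  have hφstep : ∀ k, φ (k + 1) + (1 - ζ k) * ℓsq k ≤ φ k := by
    intro k
    rw [hφ k, hφ (k + 1)]
    linarith [key k, hdev k]
  have hpsum : ∀ n, ∑ i ∈ Finset.range n, (1 - ζ i) * ℓsq i + φ n ≤ φ 0 := by
    intro n
    induction n with
    | zero => simp
    | succ m ih =>
      rw [Finset.sum_range_succ]
      linarith [hφstep m]
  have htermnn : ∀ k, 0 ≤ (1 - ζ k) * ℓsq k := fun k =>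
    mul_nonneg (by linarith [(hζ k).2]) (hℓnn k)
  have hsummable : Summable (fun n => (1 - ζ n) * ℓsq n) := by
    apply summable_of_sum_range_le htermnn
    intro n
    show ∑ i ∈ Finset.range n, (1 - ζ i) * ℓsq i ≤ φ 0
    linarith [hpsum n, hφnn n]
  have hto0 : Tendsto (fun n => (1 - ζ n) * ℓsq n) atTop (𝓝 0) :=
    hsummable.tendsto_atTop_zero
  have hℓto0 : Tendsto ℓsq atTop (𝓝 0) := by
    apply squeeze_zero hℓnn (fun n => ?_) (by simpa using hto0.const_mul ε⁻¹)
    have h1 : ε * ℓsq n ≤ (1 - ζ n) * ℓsq n :=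
      mul_le_mul_of_nonneg_right (by linarith [(hζ n).2]) (hℓnn n)
    calc ℓsq n = ε⁻¹ * (ε * ℓsq n) := by field_simp
      _ ≤ ε⁻¹ * ((1 - ζ n) * ℓsq n) :=
          mul_le_mul_of_nonneg_left h1 (by positivity)
  -- bound on the deviations
  have hdevbound : ∀ n,
      (lam (n+1) * γ (n+1) * β / (2 - lam (n+1) * γ (n+1) * β)) * mnorm M (u (n+1)) ^ 2 ≤ ℓsq n ∧
      (lam (n+1) * (2 - lam (n+1) * γ (n+1) * β) / (4 - 2 * lam (n+1) - γ (n+1) * β)) * mnorm M (v (n+1)) ^ 2 ≤ ℓsq n := by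
    intro n
    have hd := hdev n
    have hζℓ : ζ n * ℓsq n ≤ ℓsq n := by
      nlinarith [(hζ n).1, (hζ n).2, hℓnn n, hε0]
    have hunn : 0 ≤ (lam (n+1) * γ (n+1) * β / (2 - lam (n+1) * γ (n+1) * β)) * mnorm M (u (n+1)) ^ 2 :=
      mul_nonneg (div_nonneg (mul_nonneg (mul_nonneg (hl0 (n+1)).le (hγ0 (n+1)).le) hβ.le) (hA2pos (n+1)).le) (sq_nonneg _)
    have hvnn : 0 ≤ (lam (n+1) * (2 - lam (n+1) * γ (n+1) * β) / (4 - 2 * lam (n+1) - γ (n+1) * β)) * mnorm M (v (n+1)) ^ 2 :=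
      mul_nonneg (div_nonneg (mul_nonneg (hl0 (n+1)).le (hA2pos (n+1)).le) (hA4pos (n+1)).le) (sq_nonneg _)
    exact ⟨by linarith, by linarith⟩
  have hnormsq : ∀ (m : ℕ), c * ‖u m‖ ^ 2 ≤ mnorm M (u m) ^ 2 := fun m => by
    rw [msq]; exact hcpos (u m)
  have hnormsqv : ∀ (m : ℕ), c * ‖v m‖ ^ 2 ≤ mnorm M (v m) ^ 2 := fun m => by
    rw [msq]; exact hcpos (v m)
  have hubound : ∀ n, ‖u (n + 1)‖ ^ 2 ≤ (ε ^ 2 * β / 2 * c)⁻¹ * ℓsq n := by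
    intro n
    have h1 := (hdevbound n).1
    have hκ := hκu (n + 1)
    have hcoefnn : 0 ≤ lam (n+1) * γ (n+1) * β / (2 - lam (n+1) * γ (n+1) * β) :=
      le_trans (by positivity) hκ
    have h3 : ε ^ 2 * β / 2 * c * ‖u (n + 1)‖ ^ 2 ≤ ℓsq n := by
      nlinarith [mul_nonneg (sub_nonneg.mpr hκ) (mul_nonneg hc0.le (sq_nonneg ‖u (n+1)‖)),
        mul_nonneg hcoefnn (sub_nonneg.mpr (hnormsq (n+1))), h1]
    rw [inv_mul_eq_div, le_div_iff₀ (by positivity)]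
    linarith
  have hvbound : ∀ n, ‖v (n + 1)‖ ^ 2 ≤ (7 * ε ^ 2 / 32 * c)⁻¹ * ℓsq n := by
    intro n
    have h1 := (hdevbound n).2
    have hκ := hκv (n + 1)
    have hcoefnn : 0 ≤ lam (n+1) * (2 - lam (n+1) * γ (n+1) * β) / (4 - 2 * lam (n+1) - γ (n+1) * β) :=
      le_trans (by positivity) hκ
    have h3 : 7 * ε ^ 2 / 32 * c * ‖v (n + 1)‖ ^ 2 ≤ ℓsq n := by
      nlinarith [mul_nonneg (sub_nonneg.mpr hκ) (mul_nonneg hc0.le (sq_nonneg ‖v (n+1)‖)),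
        mul_nonneg hcoefnn (sub_nonneg.mpr (hnormsqv (n+1))), h1]
    rw [inv_mul_eq_div, le_div_iff₀ (by positivity)]
    linarith
  have hu2to0 : Tendsto (fun n => ‖u (n + 1)‖ ^ 2) atTop (𝓝 0) :=
    squeeze_zero (fun n => sq_nonneg _) hubound
      (by simpa only [mul_zero] using hℓto0.const_mul (ε ^ 2 * β / 2 * c)⁻¹)
  have hv2to0 : Tendsto (fun n => ‖v (n + 1)‖ ^ 2) atTop (𝓝 0) :=
    squeeze_zero (fun n => sq_nonneg _) hvbound
      (by simpa only [mul_zero] using hℓto0.const_mul (7 * ε ^ 2 / 32 * c)⁻¹)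
  have hu1 : Tendsto (fun n => ‖u (n + 1)‖) atTop (𝓝 0) := by
    have h := (Real.continuous_sqrt.tendsto 0).comp hu2to0
    rw [Real.sqrt_zero] at h
    exact h.congr fun n => Real.sqrt_sq (norm_nonneg _)
  have hv1 : Tendsto (fun n => ‖v (n + 1)‖) atTop (𝓝 0) := by
    have h := (Real.continuous_sqrt.tendsto 0).comp hv2to0
    rw [Real.sqrt_zero] at h
    exact h.congr fun n => Real.sqrt_sq (norm_nonneg _)
  exact ⟨hsummable, hℓto0,
    (tendsto_add_atTop_iff_nat 1).mp hu1,
    (tendsto_add_atTop_iff_nat 1).mp hv1⟩
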